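/- Suppose B̄, B̄_S, B̄_N, Ḡ_S, Ḡ_N : ℝ → ℝ satisfy: B̄' + 4(B̄_N Ḡ_N + B̄_S Ḡ_S)/Ω² = 0; Ḡ_S' + f Ḡ_N + 2α B̄_S/Ω² = 0; Ḡ_N' - f Ḡ_S + 2α B̄_N/Ω² = 0, where Ω : ℝ → ℝ is positive and ε₂ has been chosen so that (2ε₂ m/(m-1))/Ω^{2(m-1)} = 2α/Ω² with α a constant. Then Ḡ_S² + Ḡ_N² - α B̄ is constant. -/

import Mathlib

/-- the integral of motion (5.3.15): Ḡ_S² + Ḡ_N² - α·B̄ is constant. -/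
theorem stmt6 (f α : ℝ) (Bb BbS BbN GbS GbN Ω : ℝ → ℝ) (hΩpos : ∀ t, 0 < Ω t)
    (hBb : ∀ t, HasDerivAt Bb (-(4 * (BbN t * GbN t + BbS t * GbS t) / (Ω t) ^ 2)) t)
    (hGbS : ∀ t, HasDerivAt GbS (-(f * GbN t + 2 * α * BbS t / (Ω t) ^ 2)) t)
    (hGbN : ∀ t, HasDerivAt GbN (-(-(f * GbS t) + 2 * α * BbN t / (Ω t) ^ 2)) t) :
    ∃ c : ℝ, ∀ t, (GbS t) ^ 2 + (GbN t) ^ 2 - α * Bb t = c := by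
  set F : ℝ → ℝ := fun t => (GbS t) ^ 2 + (GbN t) ^ 2 - α * Bb t with hF
  have hder : ∀ t, HasDerivAt F 0 t := by
    intro t
    have h := (((hGbS t).pow 2).add ((hGbN t).pow 2)).sub ((hBb t).const_mul α)
    convert h using 1
    · rfl
    · rfl
    · rfl
    have hΩ : (Ω t) ^ 2 ≠ 0 := pow_ne_zero _ (hΩpos t).ne'
    field_simp
    ring
  refine ⟨F 0, fun t => ?_⟩
  have : ∀ x, F x = F 0 := by
    have := is_const_of_deriv_eq_zero (f := F)
      (fun x => (hder x).differentiableAt) (fun x => (hder x).deriv)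
    intro x; exact this x 0
  exact this t
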